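/- arXiv:2411.06476 — 5 statements merged into one kernel-verified Lean document; each statement's English description precedes it below -/
import Mathlib

section
/- Under SGD with update x_{k+1} = x_k + α_k M (b_{i_k} − ⟨a_{i_k}, x_k⟩) a_{i_k}, where i_k are i.i.d. uniform on {1,...,M}, the expectation satisfies E[⟨x_{n+1} − x*, v_ℓ⟩ | x_0] = ( ∏_{k=0}^{n} (1 − α_k σ_ℓ²) ) ⟨x_0 − x*, v_ℓ⟩. -/
open Matrix Finset

lemma aux_dot {M N : ℕ} (A : Matrix (Fin M) (Fin N) ℝ) (u w : Fin N → ℝ) :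
    u ⬝ᵥ (Aᵀ * A).mulVec w = A.mulVec u ⬝ᵥ A.mulVec w := by
  rw [← mulVec_mulVec, dotProduct_mulVec, vecMul_transpose, dotProduct_comm]

lemma crit {M N : ℕ} (A : Matrix (Fin M) (Fin N) ℝ) (b : Fin M → ℝ)
    (v : Fin N → ℝ) (xstar : Fin N → ℝ)
    (hxstar : ∀ y : Fin N → ℝ,
      (A.mulVec xstar - b) ⬝ᵥ (A.mulVec xstar - b) ≤ (A.mulVec y - b) ⬝ᵥ (A.mulVec y - b)) :
    (A.mulVec xstar - b) ⬝ᵥ A.mulVec v = 0 := by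
  set r := A.mulVec xstar - b with hr
  set w := A.mulVec v with hw
  set c := r ⬝ᵥ w with hc
  set d := w ⬝ᵥ w with hd
  have hkey : ∀ t : ℝ, 0 ≤ 2 * t * c + t ^ 2 * d := by
    intro t
    have h := hxstar (xstar + t • v)
    have hexp : A.mulVec (xstar + t • v) - b = r + t • w := by
      rw [mulVec_add, mulVec_smul, hr]; abel
    rw [hexp] at h
    have : (r + t • w) ⬝ᵥ (r + t • w) = r ⬝ᵥ r + (2 * t * c + t ^ 2 * d) := by
      simp [add_dotProduct, dotProduct_add, smul_dotProduct, dotProduct_smul,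
        smul_eq_mul, hc, hd]
      rw [dotProduct_comm w r]
      ring
    rw [this] at h
    linarith
  have hd0 : 0 ≤ d := by
    have : d = ∑ i, w i * w i := rfl
    rw [this]
    exact Finset.sum_nonneg fun i _ => mul_self_nonneg _
  by_contra hne
  have hc2 : 0 < c ^ 2 := by positivity
  have hd1 : (0:ℝ) < d + 1 := by linarith
  have hpos : (0:ℝ) < (d + 1) ^ 2 := by positivity
  have hk := hkey (-(c / (d + 1)))
  have e : 2 * (-(c / (d + 1))) * c + (-(c / (d + 1))) ^ 2 * d
      = c ^ 2 * (d - 2 * (d + 1)) / (d + 1) ^ 2 := by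
    field_simp
    ring
  rw [e] at hk
  have hk' := (le_div_iff₀ hpos).mp hk
  nlinarith

lemma step_avg {M N : ℕ} (A : Matrix (Fin M) (Fin N) ℝ) (b : Fin M → ℝ)
    (σℓ : ℝ) (v : Fin N → ℝ) (hv : (Aᵀ * A).mulVec v = σℓ ^ 2 • v)
    (xstar : Fin N → ℝ) (h0 : (A.mulVec xstar - b) ⬝ᵥ A.mulVec v = 0)
    (a : ℝ) (y : Fin N → ℝ) :
    ∑ i : Fin M, ((y + (a * M * (b i - A i ⬝ᵥ y)) • A i - xstar) ⬝ᵥ v)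
      = M * ((1 - a * σℓ ^ 2) * ((y - xstar) ⬝ᵥ v)) := by
  have hterm : ∀ i : Fin M,
      ((y + (a * M * (b i - A i ⬝ᵥ y)) • A i - xstar) ⬝ᵥ v)
        = ((y - xstar) ⬝ᵥ v) + (a * M) * ((b i - A i ⬝ᵥ y) * (A i ⬝ᵥ v)) := by
    intro i
    simp [sub_dotProduct, add_dotProduct, smul_dotProduct, smul_eq_mul]
    ring
  rw [Finset.sum_congr rfl (fun i _ => hterm i), Finset.sum_add_distrib,
    Finset.sum_const, ← Finset.mul_sum]
  have hsum : ∑ i : Fin M, (b i - A i ⬝ᵥ y) * (A i ⬝ᵥ v)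
      = (b - A.mulVec y) ⬝ᵥ A.mulVec v := by
    simp [dotProduct, mulVec, Pi.sub_apply]
  have h2 : (b - A.mulVec y) ⬝ᵥ A.mulVec v = -(σℓ ^ 2 * ((y - xstar) ⬝ᵥ v)) := by
    have : b - A.mulVec y = -(A.mulVec (y - xstar)) - (A.mulVec xstar - b) := by
      rw [mulVec_sub]; abel
    rw [this, sub_dotProduct, neg_dotProduct, h0, ← aux_dot, hv, dotProduct_smul,
      smul_eq_mul]
    ring
  rw [hsum, h2]
  simp
  ring

lemma x_prefix {M N : ℕ} (A : Matrix (Fin M) (Fin N) ℝ) (b : Fin M → ℝ) (α : ℕ → ℝ)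
    (x0 : Fin N → ℝ) (x : (ℕ → Fin M) → ℕ → (Fin N → ℝ))
    (hx0 : ∀ ω, x ω 0 = x0)
    (hupd : ∀ ω k, x ω (k + 1) =
      x ω k + (α k * M * (b (ω k) - A (ω k) ⬝ᵥ x ω k)) • A (ω k)) :
    ∀ k (ω ω' : ℕ → Fin M), (∀ j, j < k → ω j = ω' j) → x ω k = x ω' k := by
  intro k
  induction k with
  | zero => intro ω ω' _; rw [hx0, hx0]
  | succ k ih =>
    intro ω ω' h
    rw [hupd, hupd, ih ω ω' (fun j hj => h j (Nat.lt_succ_of_lt hj)),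
      h k (Nat.lt_succ_self k)]

/-- SGD on `F(x) = (1/2)‖Ax − b‖²` with update
`x_{k+1} = x_k + α_k M (b_{i_k} − ⟨a_{i_k}, x_k⟩) a_{i_k}`, with `i_0, …, i_n`
i.i.d. uniform on `{1,…,M}`: the expectation (average over all index sequences)
satisfies `E[⟨x_{n+1} − x*, v_ℓ⟩ | x_0] = (∏_{k=0}^n (1 − α_k σ_ℓ²)) ⟨x_0 − x*, v_ℓ⟩`. -/
theorem stmt_5 {M N : ℕ} (hM : 0 < M) (A : Matrix (Fin M) (Fin N) ℝ) (b : Fin M → ℝ)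
    (σℓ : ℝ) (v : Fin N → ℝ) (hv : (Aᵀ * A).mulVec v = σℓ ^ 2 • v)
    (xstar : Fin N → ℝ)
    (hxstar : ∀ y : Fin N → ℝ,
      (A.mulVec xstar - b) ⬝ᵥ (A.mulVec xstar - b) ≤ (A.mulVec y - b) ⬝ᵥ (A.mulVec y - b))
    (α : ℕ → ℝ) (x0 : Fin N → ℝ)
    (x : (ℕ → Fin M) → ℕ → (Fin N → ℝ))
    (hx0 : ∀ ω, x ω 0 = x0)
    (hupd : ∀ ω k, x ω (k + 1) =
      x ω k + (α k * M * (b (ω k) - A (ω k) ⬝ᵥ x ω k)) • A (ω k)) (n : ℕ) :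
    (1 / (M : ℝ) ^ (n + 1)) *
        ∑ ω : Fin (n + 1) → Fin M,
          ((x (fun j => if h : j < n + 1 then ω ⟨j, h⟩ else ω 0) (n + 1) - xstar) ⬝ᵥ v) =
      (∏ k ∈ Finset.range (n + 1), (1 - α k * σℓ ^ 2)) * ((x0 - xstar) ⬝ᵥ v) := by
  have hM0 : (M : ℝ) ≠ 0 := Nat.cast_ne_zero.mpr hM.ne'
  have h0 : (A.mulVec xstar - b) ⬝ᵥ A.mulVec v = 0 := crit A b v xstar hxstar
  induction n with
  | zero =>
    have hsum : ∑ ω : Fin 1 → Fin M,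
        ((x (fun j => if h : j < 1 then ω ⟨j, h⟩ else ω 0) 1 - xstar) ⬝ᵥ v)
          = ∑ i : Fin M,
            ((x0 + (α 0 * M * (b i - A i ⬝ᵥ x0)) • A i - xstar) ⬝ᵥ v) := by
      have key : ∀ ω : Fin 1 → Fin M,
          x (fun j => if h : j < 1 then ω ⟨j, h⟩ else ω 0) 1 =
            x0 + (α 0 * M * (b (ω 0) - A (ω 0) ⬝ᵥ x0)) • A (ω 0) := by
        intro ω
        rw [hupd, hx0]
        norm_num
      rw [Finset.sum_congr rfl (fun ω _ => by rw [key ω])]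
      exact Fintype.sum_equiv (Equiv.funUnique (Fin 1) (Fin M)) _ _ (fun ω => rfl)
    rw [hsum, step_avg A b σℓ v hv xstar h0]
    field_simp
    simp
    ring
  | succ n ih =>
    set ext1 : (Fin (n + 1) → Fin M) → ℕ → Fin M :=
      fun ω' j => if h : j < n + 1 then ω' ⟨j, h⟩ else ω' 0 with hext1
    set ext2 : (Fin (n + 2) → Fin M) → ℕ → Fin M :=
      fun ω j => if h : j < n + 2 then ω ⟨j, h⟩ else ω 0 with hext2
    have hsplit : ∑ ω : Fin (n + 2) → Fin M, ((x (ext2 ω) (n + 2) - xstar) ⬝ᵥ v)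
        = ∑ ω' : Fin (n + 1) → Fin M, ∑ i : Fin M,
            ((x (ext2 (Fin.snoc ω' i)) (n + 2) - xstar) ⬝ᵥ v) := by
      have h := Fintype.sum_equiv (Fin.snocEquiv (fun _ : Fin (n + 2) => Fin M))
        (fun p => ((x (ext2 (Fin.snoc p.2 p.1)) (n + 2) - xstar) ⬝ᵥ v))
        (fun ω => ((x (ext2 ω) (n + 2) - xstar) ⬝ᵥ v))
        (fun p => by simp [Fin.snocEquiv])
      rw [← h, Fintype.sum_prod_type]
      exact Finset.sum_comm
    have hstep : ∀ (ω' : Fin (n + 1) → Fin M) (i : Fin M),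
        x (ext2 (Fin.snoc ω' i)) (n + 2)
          = x (ext1 ω') (n + 1)
            + (α (n + 1) * M * (b i - A i ⬝ᵥ x (ext1 ω') (n + 1))) • A i := by
      intro ω' i
      have hlast : ext2 (Fin.snoc ω' i) (n + 1) = i := by
        simp [hext2, Fin.snoc]
      have hpre : x (ext2 (Fin.snoc ω' i)) (n + 1) = x (ext1 ω') (n + 1) := by
        apply x_prefix A b α x0 x hx0 hupd
        intro j hj
        have hj2 : j < n + 2 := Nat.lt_succ_of_lt hj
        simp only [hext1, hext2, dif_pos hj, dif_pos hj2]
        have : (⟨j, hj2⟩ : Fin (n + 2)) = Fin.castSucc ⟨j, hj⟩ := rfl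
        rw [this, Fin.snoc_castSucc]
      rw [hupd, hlast, hpre]
    have hinner : ∀ ω' : Fin (n + 1) → Fin M,
        ∑ i : Fin M, ((x (ext2 (Fin.snoc ω' i)) (n + 2) - xstar) ⬝ᵥ v)
          = M * ((1 - α (n + 1) * σℓ ^ 2) * ((x (ext1 ω') (n + 1) - xstar) ⬝ᵥ v)) := by
      intro ω'
      rw [Finset.sum_congr rfl (fun i _ => by rw [hstep ω' i])]
      exact step_avg A b σℓ v hv xstar h0 (α (n + 1)) _
    rw [hsplit, Finset.sum_congr rfl (fun ω' _ => hinner ω'), ← Finset.mul_sum,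
      ← Finset.mul_sum, Finset.prod_range_succ]
    have hLHS : (1 / (M : ℝ) ^ (n + 1 + 1)) *
        ((M : ℝ) * ((1 - α (n + 1) * σℓ ^ 2) *
          ∑ ω' : Fin (n + 1) → Fin M, ((x (ext1 ω') (n + 1) - xstar) ⬝ᵥ v)))
        = (1 - α (n + 1) * σℓ ^ 2) * ((1 / (M : ℝ) ^ (n + 1)) *
          ∑ ω' : Fin (n + 1) → Fin M, ((x (ext1 ω') (n + 1) - xstar) ⬝ᵥ v)) := by
      field_simp
      ring
    rw [hLHS, ih]
    ring
end

section
/- For any SGD iterate x_k, E[⟨∇f_i(x_k), v_ℓ⟩² | x_k] ≤ M L̃ c(A) σ_max² ‖x_k − x*‖² + 2 M L̃ F*, where the expectation is over i uniform on {1,...,M}. -/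
open Matrix Finset

set_option maxHeartbeats 1000000

/-- For SGD on least squares with `f_i(x) = (M/2)(a_iᵀx − b_i)²` (so
`⟨∇f_i(x), v⟩ = M(a_iᵀx − b_i)⟨a_i, v⟩`), the expectation over `i` uniform on
`{1,…,M}` satisfies
`E[⟨∇f_i(x), v⟩²] ≤ M L̃ c(A) σ_max² ‖x − x*‖² + 2 M L̃ F*`. -/
theorem stmt_6 {M N : ℕ} (hM : 0 < M) (A : Matrix (Fin M) (Fin N) ℝ) (b : Fin M → ℝ)
    (σmax σmin : ℝ) (hσmin : 0 < σmin)
    (hσmax : IsGreatest {t : ℝ | ∃ y : Fin N → ℝ, y ⬝ᵥ y = 1 ∧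
      (A.mulVec y) ⬝ᵥ (A.mulVec y) = t} (σmax ^ 2))
    (hσminIsLeast : IsLeast {t : ℝ | ∃ y : Fin N → ℝ, y ⬝ᵥ y = 1 ∧
      (A.mulVec y) ⬝ᵥ (A.mulVec y) = t} (σmin ^ 2))
    (Ltil : ℝ) (hLtil : IsGreatest {t : ℝ | ∃ i : Fin M, (A i) ⬝ᵥ (A i) = t} Ltil)
    (Fstar : ℝ)
    (hFstar : IsLeast {t : ℝ | ∃ y : Fin N → ℝ,
      (1 / 2) * ((A.mulVec y - b) ⬝ᵥ (A.mulVec y - b)) = t} Fstar)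
    (xstar : Fin N → ℝ)
    (hxstar : (1 / 2) * ((A.mulVec xstar - b) ⬝ᵥ (A.mulVec xstar - b)) = Fstar)
    (v : Fin N → ℝ) (hv : v ⬝ᵥ v = 1) (x : Fin N → ℝ) :
    (1 / (M : ℝ)) * ∑ i : Fin M, ((M : ℝ) * (A i ⬝ᵥ x - b i) * (A i ⬝ᵥ v)) ^ 2 ≤
      (M : ℝ) * Ltil * (σmax ^ 2 / σmin ^ 2) * σmax ^ 2 * ((x - xstar) ⬝ᵥ (x - xstar)) +
        2 * (M : ℝ) * Ltil * Fstar := by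
  set d : Fin N → ℝ := x - xstar with hd
  set r : Fin M → ℝ := A.mulVec xstar - b with hr
  set u : Fin M → ℝ := A.mulVec d with hu
  set α : ℝ := u ⬝ᵥ u with hα
  set β : ℝ := u ⬝ᵥ r with hβ
  set s : ℝ := d ⬝ᵥ d with hs
  have hMpos : (0:ℝ) < M := by exact_mod_cast hM
  -- basic nonnegativity
  have hdotnn : ∀ {n : ℕ} (w : Fin n → ℝ), 0 ≤ w ⬝ᵥ w := by
    intro n w
    refine Finset.sum_nonneg fun j _ => mul_self_nonneg _
  have hαnn : 0 ≤ α := hdotnn u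
  have hsnn : 0 ≤ s := hdotnn d
  have hL0 : 0 ≤ Ltil := le_trans (hdotnn (A ⟨0, hM⟩)) (hLtil.2 ⟨⟨0, hM⟩, rfl⟩)
  have hσmaxnn : 0 ≤ σmax ^ 2 := by
    obtain ⟨y, hy1, hy2⟩ := hσmax.1
    exact hy2 ▸ hdotnn _
  -- Cauchy-Schwarz bound for each row
  have hCS : ∀ i : Fin M, (A i ⬝ᵥ v) ^ 2 ≤ Ltil := by
    intro i
    have h := Finset.sum_mul_sq_le_sq_mul_sq Finset.univ (A i) v
    have h1 : (A i ⬝ᵥ v) ^ 2 ≤ (A i ⬝ᵥ A i) * (v ⬝ᵥ v) := by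
      simpa [dotProduct, pow_two] using h
    have h2 : A i ⬝ᵥ A i ≤ Ltil := hLtil.2 ⟨i, rfl⟩
    calc (A i ⬝ᵥ v) ^ 2 ≤ (A i ⬝ᵥ A i) * (v ⬝ᵥ v) := h1
      _ = A i ⬝ᵥ A i := by rw [hv, mul_one]
      _ ≤ Ltil := h2
  -- residual decomposition : A x - b = u + r
  have hdecomp : A.mulVec x - b = u + r := by
    rw [hu, hr, hd, Matrix.mulVec_sub]; abel
  have hrr : r ⬝ᵥ r = 2 * Fstar := by linarith [hxstar]
  -- orthogonality : β = 0
  have hβ0 : β = 0 := by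
    have key : ∀ t : ℝ, 0 ≤ t ^ 2 * α + 2 * t * β := by
      intro t
      have hmem : (1 / 2 : ℝ) * ((A.mulVec (xstar + t • d) - b) ⬝ᵥ
          (A.mulVec (xstar + t • d) - b)) ∈ {t : ℝ | ∃ y : Fin N → ℝ,
          (1 / 2) * ((A.mulVec y - b) ⬝ᵥ (A.mulVec y - b)) = t} := ⟨_, rfl⟩
      have hle := hFstar.2 hmem
      have hexp : A.mulVec (xstar + t • d) - b = t • u + r := by
        rw [Matrix.mulVec_add, Matrix.mulVec_smul, hu, hr]; abel
      rw [hexp] at hle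
      have hdot : (t • u + r) ⬝ᵥ (t • u + r) = t ^ 2 * α + 2 * t * β + r ⬝ᵥ r := by
        simp [add_dotProduct, dotProduct_add, smul_dotProduct, dotProduct_smul,
          dotProduct_comm r u, hα, hβ, smul_eq_mul]
        ring
      rw [hdot, hrr] at hle
      linarith
    have h1 := key (-β / (α + 1))
    have hα1 : (0:ℝ) < α + 1 := by linarith
    have : β ^ 2 * (α + 2) ≤ 0 := by
      have h2 : (-β / (α + 1)) ^ 2 * α + 2 * (-β / (α + 1)) * β =
          -(β ^ 2 * (α + 2)) / (α + 1) ^ 2 := by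
        field_simp
        ring
      rw [h2] at h1
      have h3 : (0:ℝ) < (α + 1) ^ 2 := by positivity
      have h4 := mul_nonneg h1 (le_of_lt h3)
      rw [div_mul_cancel₀ _ (ne_of_gt h3)] at h4
      linarith
    nlinarith [sq_nonneg β, hαnn]
  -- norm of residual
  have hAxb : (A.mulVec x - b) ⬝ᵥ (A.mulVec x - b) = α + 2 * Fstar := by
    rw [hdecomp]
    have : (u + r) ⬝ᵥ (u + r) = α + 2 * β + r ⬝ᵥ r := by
      simp [add_dotProduct, dotProduct_add, dotProduct_comm r u, hα, hβ]
      ring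
    rw [this, hrr, hβ0]; ring
  -- α ≤ σmax² s
  have hαle : α ≤ σmax ^ 2 * s := by
    rcases eq_or_lt_of_le hsnn with h0 | hspos
    · have hd0 : d = 0 := dotProduct_self_eq_zero.mp h0.symm
      have hu0 : u = 0 := by rw [hu, hd0, Matrix.mulVec_zero]
      have hα0 : α = 0 := by rw [hα, hu0, zero_dotProduct]
      rw [hα0]
      exact mul_nonneg hσmaxnn hsnn
    · set c : ℝ := (Real.sqrt s)⁻¹ with hc
      have hsq : Real.sqrt s * Real.sqrt s = s := Real.mul_self_sqrt hsnn
      have hsqpos : 0 < Real.sqrt s := Real.sqrt_pos.mpr hspos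
      have hyy : (c • d) ⬝ᵥ (c • d) = 1 := by
        rw [smul_dotProduct, dotProduct_smul, smul_eq_mul, smul_eq_mul, ← hs, hc]
        field_simp
        rw [Real.sq_sqrt hsnn]
      have hmem : (A.mulVec (c • d)) ⬝ᵥ (A.mulVec (c • d)) ∈ {t : ℝ | ∃ y : Fin N → ℝ,
          y ⬝ᵥ y = 1 ∧ (A.mulVec y) ⬝ᵥ (A.mulVec y) = t} := ⟨c • d, hyy, rfl⟩
      have hle := hσmax.2 hmem
      have hexp : (A.mulVec (c • d)) ⬝ᵥ (A.mulVec (c • d)) = c ^ 2 * α := by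
        rw [Matrix.mulVec_smul, smul_dotProduct, dotProduct_smul, ← hu, ← hα,
          smul_eq_mul, smul_eq_mul]
        ring
      rw [hexp] at hle
      have hc2 : c ^ 2 = s⁻¹ := by
        rw [hc, pow_two, ← mul_inv, hsq]
      rw [hc2] at hle
      calc α = s * (s⁻¹ * α) := by field_simp
        _ ≤ s * σmax ^ 2 := by
            exact mul_le_mul_of_nonneg_left hle (le_of_lt hspos)
        _ = σmax ^ 2 * s := by ring
  -- σmax² ≤ (σmax²/σmin²) σmax²
  have hratio : σmax ^ 2 * s ≤ (σmax ^ 2 / σmin ^ 2) * σmax ^ 2 * s := by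
    have hminle : σmin ^ 2 ≤ σmax ^ 2 := hσmax.2 hσminIsLeast.1
    have hminpos : (0:ℝ) < σmin ^ 2 := by positivity
    have h1 : (1:ℝ) ≤ σmax ^ 2 / σmin ^ 2 := (one_le_div hminpos).mpr hminle
    nlinarith [mul_nonneg hσmaxnn hsnn]
  -- sum bound
  have hsum : ∑ i : Fin M, ((M : ℝ) * (A i ⬝ᵥ x - b i) * (A i ⬝ᵥ v)) ^ 2 ≤
      (M : ℝ) ^ 2 * Ltil * ((A.mulVec x - b) ⬝ᵥ (A.mulVec x - b)) := by
    have heq : (A.mulVec x - b) ⬝ᵥ (A.mulVec x - b) =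
        ∑ i : Fin M, (A i ⬝ᵥ x - b i) ^ 2 := by
      simp [dotProduct, Matrix.mulVec, pow_two, Pi.sub_apply]
    rw [heq, Finset.mul_sum]
    refine Finset.sum_le_sum fun i _ => ?_
    have h1 : ((M : ℝ) * (A i ⬝ᵥ x - b i) * (A i ⬝ᵥ v)) ^ 2 =
        (M : ℝ) ^ 2 * (A i ⬝ᵥ x - b i) ^ 2 * (A i ⬝ᵥ v) ^ 2 := by ring
    rw [h1]
    have h2 := hCS i
    nlinarith [sq_nonneg (A i ⬝ᵥ x - b i), sq_nonneg ((M:ℝ) * (A i ⬝ᵥ x - b i)), hMpos]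
  -- conclude
  have hfinal : (1 / (M : ℝ)) * ∑ i : Fin M, ((M : ℝ) * (A i ⬝ᵥ x - b i) * (A i ⬝ᵥ v)) ^ 2 ≤
      (M : ℝ) * Ltil * (α + 2 * Fstar) := by
    rw [← hAxb]
    rw [div_mul_eq_mul_div, one_mul, div_le_iff₀ hMpos]
    calc ∑ i : Fin M, ((M : ℝ) * (A i ⬝ᵥ x - b i) * (A i ⬝ᵥ v)) ^ 2
        ≤ (M : ℝ) ^ 2 * Ltil * ((A.mulVec x - b) ⬝ᵥ (A.mulVec x - b)) := hsum
      _ = (M : ℝ) * Ltil * ((A.mulVec x - b) ⬝ᵥ (A.mulVec x - b)) * (M : ℝ) := by ring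
  have hML : 0 ≤ (M : ℝ) * Ltil := mul_nonneg (le_of_lt hMpos) hL0
  calc (1 / (M : ℝ)) * ∑ i : Fin M, ((M : ℝ) * (A i ⬝ᵥ x - b i) * (A i ⬝ᵥ v)) ^ 2
      ≤ (M : ℝ) * Ltil * (α + 2 * Fstar) := hfinal
    _ ≤ (M : ℝ) * Ltil * ((σmax ^ 2 / σmin ^ 2) * σmax ^ 2 * s + 2 * Fstar) := by
        have : α ≤ (σmax ^ 2 / σmin ^ 2) * σmax ^ 2 * s := le_trans hαle hratio
        nlinarith [hML, this]
    _ = (M : ℝ) * Ltil * (σmax ^ 2 / σmin ^ 2) * σmax ^ 2 * s +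
        2 * (M : ℝ) * Ltil * Fstar := by ring
end

section
/- One SGD step satisfies E[⟨x_{k+1} − x*, v_ℓ⟩² | x_k] ≤ (1 − 2α_k σ_ℓ²) ⟨x_k − x*, v_ℓ⟩² + α_k² M L̃ c(A) σ_max² ‖x_k − x*‖² + 2 α_k² M L̃ F*. -/
open Matrix Finset

private lemma dp_self_nonneg {n:ℕ} (x : Fin n → ℝ) : 0 ≤ x ⬝ᵥ x :=
  Finset.sum_nonneg fun i _ => mul_self_nonneg _

private lemma cs {n:ℕ} (x y : Fin n → ℝ) : (x ⬝ᵥ y)^2 ≤ (x ⬝ᵥ x)*(y ⬝ᵥ y) := by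
  simpa [dotProduct, sq] using Finset.sum_mul_sq_le_sq_mul_sq Finset.univ x y

private lemma adj {m n:ℕ} (A : Matrix (Fin m) (Fin n) ℝ) (x y : Fin n → ℝ) :
    (A.mulVec x) ⬝ᵥ (A.mulVec y) = x ⬝ᵥ ((Aᵀ*A).mulVec y) := by
  rw [← Matrix.mulVec_mulVec]; conv_rhs => rw [Matrix.dotProduct_mulVec, Matrix.vecMul_transpose]


set_option maxHeartbeats 1000000 in
/-- One SGD step `x_{k+1} = x_k − α_k ∇f_{i}(x_k)` with `f_i(x) = (M/2)(a_iᵀx − b_i)²`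
and `i` uniform on `{1,…,M}` satisfies
`E[⟨x_{k+1} − x*, v_ℓ⟩²] ≤ (1 − 2α_k σ_ℓ²)⟨x_k − x*, v_ℓ⟩²
  + α_k² M L̃ c(A) σ_max² ‖x_k − x*‖² + 2 α_k² M L̃ F*`. -/
theorem stmt_7 {M N : ℕ} (hM : 0 < M) (A : Matrix (Fin M) (Fin N) ℝ) (b : Fin M → ℝ)
    (σmax σmin : ℝ) (hσmin : 0 < σmin)
    (hσmax : IsGreatest {t : ℝ | ∃ y : Fin N → ℝ, y ⬝ᵥ y = 1 ∧
      (A.mulVec y) ⬝ᵥ (A.mulVec y) = t} (σmax ^ 2))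
    (hσminIsLeast : IsLeast {t : ℝ | ∃ y : Fin N → ℝ, y ⬝ᵥ y = 1 ∧
      (A.mulVec y) ⬝ᵥ (A.mulVec y) = t} (σmin ^ 2))
    (Ltil : ℝ) (hLtil : IsGreatest {t : ℝ | ∃ i : Fin M, (A i) ⬝ᵥ (A i) = t} Ltil)
    (Fstar : ℝ)
    (hFstar : IsLeast {t : ℝ | ∃ y : Fin N → ℝ,
      (1 / 2) * ((A.mulVec y - b) ⬝ᵥ (A.mulVec y - b)) = t} Fstar)
    (xstar : Fin N → ℝ)
    (hxstar : (1 / 2) * ((A.mulVec xstar - b) ⬝ᵥ (A.mulVec xstar - b)) = Fstar)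
    (σℓ : ℝ) (v : Fin N → ℝ) (hv : (Aᵀ * A).mulVec v = σℓ ^ 2 • v) (hv1 : v ⬝ᵥ v = 1)
    (αk : ℝ) (xk : Fin N → ℝ) :
    (1 / (M : ℝ)) * ∑ i : Fin M,
        (((xk - (αk * M * (A i ⬝ᵥ xk - b i)) • A i) - xstar) ⬝ᵥ v) ^ 2 ≤
      (1 - 2 * αk * σℓ ^ 2) * ((xk - xstar) ⬝ᵥ v) ^ 2 +
        αk ^ 2 * (M : ℝ) * Ltil * (σmax ^ 2 / σmin ^ 2) * σmax ^ 2 *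
          ((xk - xstar) ⬝ᵥ (xk - xstar)) +
        2 * αk ^ 2 * (M : ℝ) * Ltil * Fstar := by
  set e : Fin N → ℝ := xk - xstar with he
  set r : Fin M → ℝ := A.mulVec xstar - b with hr
  -- first-order optimality: residual is orthogonal to the range of A
  have horth : ∀ d : Fin N → ℝ, (A.mulVec d) ⬝ᵥ r = 0 := by
    intro d
    by_contra hne
    set c1 : ℝ := (A.mulVec d) ⬝ᵥ r with hc1
    set c2 : ℝ := (A.mulVec d) ⬝ᵥ (A.mulVec d) with hc2
    have hc2n : 0 ≤ c2 := dp_self_nonneg _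
    have key : ∀ t : ℝ, 0 ≤ t * c1 + t^2/2 * c2 := by
      intro t
      have h1 : Fstar ≤ (1/2) * ((A.mulVec (xstar + t • d) - b) ⬝ᵥ
          (A.mulVec (xstar + t • d) - b)) := hFstar.2 ⟨_, rfl⟩
      have h2 : A.mulVec (xstar + t • d) - b = r + t • A.mulVec d := by
        rw [Matrix.mulVec_add, Matrix.mulVec_smul, hr]; abel
      rw [h2] at h1
      have h3 : (r + t • A.mulVec d) ⬝ᵥ (r + t • A.mulVec d)
          = r ⬝ᵥ r + 2 * t * c1 + t^2 * c2 := by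
        simp only [add_dotProduct, dotProduct_add, smul_dotProduct,
          dotProduct_smul, smul_eq_mul, hc1, hc2]
        rw [dotProduct_comm (A.mulVec d) r]; ring
      rw [h3] at h1
      linarith
    have hq := key (-c1/(c2+1))
    have hpos : (0:ℝ) < c2 + 1 := by linarith
    have : 0 < c1^2 := by positivity
    have hq2 : 0 ≤ (c2+1)^2 * ((-c1/(c2+1)) * c1 + (-c1/(c2+1))^2/2 * c2) :=
      mul_nonneg (by positivity) hq
    have hq3 : (c2+1)^2 * ((-c1/(c2+1)) * c1 + (-c1/(c2+1))^2/2 * c2)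
        = -c1^2*(c2+1) + c1^2*c2/2 := by
      field_simp
    rw [hq3] at hq2
    nlinarith [mul_nonneg this.le hc2n]
  have hMne : ((M:ℝ)) ≠ 0 := Nat.cast_ne_zero.2 hM.ne'
  set s : ℝ := e ⬝ᵥ v with hs
  set ri : Fin M → ℝ := fun i => A i ⬝ᵥ xk - b i with hri
  set ti : Fin M → ℝ := fun i => A i ⬝ᵥ v with hti
  have hLnn : 0 ≤ Ltil := by
    obtain ⟨i, hi⟩ := hLtil.1
    exact hi ▸ dp_self_nonneg (A i)
  -- rewrite each summand
  have hterm : ∀ i : Fin M,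
      (((xk - (αk * M * (A i ⬝ᵥ xk - b i)) • A i) - xstar) ⬝ᵥ v) ^ 2
      = (s - (αk * M) * (ri i * ti i)) ^ 2 := by
    intro i
    have h1 : (xk - (αk * M * (A i ⬝ᵥ xk - b i)) • A i) - xstar
        = e - (αk * M * (A i ⬝ᵥ xk - b i)) • A i := by
      rw [he]; abel
    rw [h1, sub_dotProduct, smul_dotProduct, smul_eq_mul, hs, hri, hti]
    ring
  -- key identity for the cross term
  have hdec : A.mulVec xk - b = A.mulVec e + r := by
    rw [he, hr, Matrix.mulVec_sub]; abel
  have hS1 : ∑ i : Fin M, ri i * ti i = σℓ ^ 2 * s := by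
    have h0 : ∑ i : Fin M, ri i * ti i = (A.mulVec xk - b) ⬝ᵥ (A.mulVec v) :=
      Finset.sum_congr rfl fun i _ => rfl
    rw [h0, hdec, add_dotProduct, dotProduct_comm r, horth v, adj, hv,
      dotProduct_smul, smul_eq_mul, hs, add_zero]
  -- second moment
  have hres : ∑ i : Fin M, (ri i) ^ 2
      = (A.mulVec e) ⬝ᵥ (A.mulVec e) + 2 * Fstar := by
    have h0 : ∑ i : Fin M, (ri i) ^ 2 = (A.mulVec xk - b) ⬝ᵥ (A.mulVec xk - b) := by
      simp only [dotProduct, sq]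
      exact Finset.sum_congr rfl fun i _ => rfl
    rw [h0, hdec, add_dotProduct, dotProduct_add, dotProduct_add,
      horth e, dotProduct_comm r (A.mulVec e)]
    have : r ⬝ᵥ r = 2 * Fstar := by rw [← hxstar]; ring
    rw [horth e, this]; ring
  have hAe : (A.mulVec e) ⬝ᵥ (A.mulVec e) ≤ σmax ^ 2 * (e ⬝ᵥ e) := by
    by_cases hez : e = 0
    · simp [hez, Matrix.mulVec_zero]
    · have hee : 0 < e ⬝ᵥ e :=
        lt_of_le_of_ne (dp_self_nonneg e) (fun h => hez (dotProduct_self_eq_zero.mp h.symm))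
      set c : ℝ := (Real.sqrt (e ⬝ᵥ e))⁻¹ with hc
      have hcsq : c ^ 2 = (e ⬝ᵥ e)⁻¹ := by
        rw [hc, ← Real.sqrt_inv, Real.sq_sqrt (by positivity)]
      have hy1 : (c • e) ⬝ᵥ (c • e) = 1 := by
        rw [smul_dotProduct, dotProduct_smul, smul_eq_mul, smul_eq_mul,
          ← mul_assoc, ← sq, hcsq]
        field_simp
      have hmem := hσmax.2 ⟨c • e, hy1, rfl⟩
      have hAy : (A.mulVec (c • e)) ⬝ᵥ (A.mulVec (c • e))
          = (e ⬝ᵥ e)⁻¹ * ((A.mulVec e) ⬝ᵥ (A.mulVec e)) := by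
        rw [Matrix.mulVec_smul, smul_dotProduct, dotProduct_smul,
          smul_eq_mul, smul_eq_mul, ← mul_assoc, ← sq, hcsq]
      rw [hAy] at hmem
      rw [mul_comm]
      exact (inv_mul_le_iff₀ hee).mp hmem
  have hti2 : ∀ i : Fin M, (ti i) ^ 2 ≤ Ltil := by
    intro i
    calc (ti i) ^ 2 ≤ (A i ⬝ᵥ A i) * (v ⬝ᵥ v) := cs (A i) v
      _ = A i ⬝ᵥ A i := by rw [hv1, mul_one]
      _ ≤ Ltil := hLtil.2 ⟨i, rfl⟩
  have hS2 : ∑ i : Fin M, (ri i * ti i) ^ 2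
      ≤ Ltil * ((A.mulVec e) ⬝ᵥ (A.mulVec e) + 2 * Fstar) := by
    rw [← hres, Finset.mul_sum]
    apply Finset.sum_le_sum
    intro i _
    have := hti2 i
    nlinarith [sq_nonneg (ri i)]
  -- chain for the variance term
  have hratio : 1 ≤ σmax ^ 2 / σmin ^ 2 := by
    have h1 : σmin ^ 2 ≤ σmax ^ 2 := hσmax.2 hσminIsLeast.1
    rw [le_div_iff₀ (by positivity)]; linarith
  have hchain : (A.mulVec e) ⬝ᵥ (A.mulVec e)
      ≤ (σmax ^ 2 / σmin ^ 2) * σmax ^ 2 * (e ⬝ᵥ e) := by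
    have h2 : σmax ^ 2 * (e ⬝ᵥ e) ≤ (σmax ^ 2 / σmin ^ 2) * (σmax ^ 2 * (e ⬝ᵥ e)) := by
      nlinarith [mul_nonneg (sq_nonneg σmax) (dp_self_nonneg e), sub_nonneg.2 hratio,
        mul_nonneg (sub_nonneg.2 hratio) (mul_nonneg (sq_nonneg σmax) (dp_self_nonneg e))]
    calc (A.mulVec e) ⬝ᵥ (A.mulVec e) ≤ σmax ^ 2 * (e ⬝ᵥ e) := hAe
      _ ≤ (σmax ^ 2 / σmin ^ 2) * (σmax ^ 2 * (e ⬝ᵥ e)) := h2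
      _ = (σmax ^ 2 / σmin ^ 2) * σmax ^ 2 * (e ⬝ᵥ e) := by ring
  have hS2' : ∑ i : Fin M, (ri i * ti i) ^ 2
      ≤ Ltil * ((σmax ^ 2 / σmin ^ 2) * σmax ^ 2 * (e ⬝ᵥ e) + 2 * Fstar) := by
    calc ∑ i : Fin M, (ri i * ti i) ^ 2
        ≤ Ltil * ((A.mulVec e) ⬝ᵥ (A.mulVec e) + 2 * Fstar) := hS2
      _ ≤ Ltil * ((σmax ^ 2 / σmin ^ 2) * σmax ^ 2 * (e ⬝ᵥ e) + 2 * Fstar) := by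
          apply mul_le_mul_of_nonneg_left _ hLnn
          linarith [hchain]
  -- expand the sum
  have hexp : ∑ i : Fin M,
      (((xk - (αk * M * (A i ⬝ᵥ xk - b i)) • A i) - xstar) ⬝ᵥ v) ^ 2
      = (M : ℝ) * s ^ 2 - 2 * αk * (M : ℝ) * s * (∑ i : Fin M, ri i * ti i)
        + αk ^ 2 * (M : ℝ) ^ 2 * (∑ i : Fin M, (ri i * ti i) ^ 2) := by
    rw [Finset.sum_congr rfl (fun i _ => hterm i)]
    have h1 : ∀ i : Fin M, (s - (αk * M) * (ri i * ti i)) ^ 2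
        = s ^ 2 - (2 * αk * (M : ℝ) * s) * (ri i * ti i)
          + (αk ^ 2 * (M : ℝ) ^ 2) * (ri i * ti i) ^ 2 := fun i => by ring
    rw [Finset.sum_congr rfl (fun i _ => h1 i)]
    rw [Finset.sum_add_distrib, Finset.sum_sub_distrib, ← Finset.mul_sum, ← Finset.mul_sum,
      Finset.sum_const, Finset.card_univ, Fintype.card_fin, nsmul_eq_mul]
  rw [hexp, hS1]
  have hlhs : (1 / (M : ℝ)) * ((M : ℝ) * s ^ 2 - 2 * αk * (M : ℝ) * s * (σℓ ^ 2 * s)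
      + αk ^ 2 * (M : ℝ) ^ 2 * (∑ i : Fin M, (ri i * ti i) ^ 2))
      = s ^ 2 - 2 * αk * σℓ ^ 2 * s ^ 2
        + (αk ^ 2 * (M : ℝ)) * (∑ i : Fin M, (ri i * ti i) ^ 2) := by
    field_simp
  rw [hlhs]
  have hfin : (αk ^ 2 * (M : ℝ)) * (∑ i : Fin M, (ri i * ti i) ^ 2)
      ≤ (αk ^ 2 * (M : ℝ)) * (Ltil * ((σmax ^ 2 / σmin ^ 2) * σmax ^ 2 * (e ⬝ᵥ e) + 2 * Fstar)) :=
    mul_le_mul_of_nonneg_left hS2' (by positivity)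
  linarith [hfin]
end

section
/- If SGD is run with step size α_k = a/(b+k) for a, b > 0, then |E[⟨x_{n+1} − x*, v_ℓ⟩]| ≤ (b/(b+n))^{a σ_ℓ²} |⟨x_0 − x*, v_ℓ⟩|, assuming a σ_ℓ² ≤ b. -/
open Matrix Finset

private theorem stmt_11_fac (s t : ℝ) (hs : 0 ≤ s) (ht : 0 < t) :
    1 - s / t ≤ (t / (t + 1)) ^ s := by
  have h1 : 1 - s / t ≤ Real.exp (-(s / t)) := by
    have := Real.add_one_le_exp (-(s / t)); linarith
  have hpos : 0 < t / (t + 1) := by positivity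
  rw [Real.rpow_def_of_pos hpos]
  refine h1.trans (Real.exp_le_exp.2 ?_)
  have hlog : Real.log ((t + 1) / t) ≤ (t + 1) / t - 1 :=
    Real.log_le_sub_one_of_pos (by positivity)
  have h2 : -(1 / t) ≤ Real.log (t / (t + 1)) := by
    rw [Real.log_div (by positivity) (by positivity)] at hlog ⊢
    have : (t + 1) / t - 1 = 1 / t := by field_simp; ring
    linarith [hlog, this]
  have := mul_le_mul_of_nonneg_left h2 hs
  calc -(s / t) = s * (-(1 / t)) := by ring
    _ ≤ s * Real.log (t / (t + 1)) := this
    _ = Real.log (t / (t + 1)) * s := by ring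

private theorem stmt_11_prodbd (s c : ℝ) (hs : 0 ≤ s) (hc : 0 < c) (hsc : s ≤ c) (m : ℕ) :
    ∏ k ∈ Finset.range m, (1 - s / (c + k)) ≤ (c / (c + m)) ^ s := by
  induction m with
  | zero => simp [div_self hc.ne']
  | succ m ih =>
    rw [Finset.prod_range_succ]
    have ht : (0:ℝ) < c + m := by positivity
    have h1 : 1 - s / (c + m) ≤ ((c + m) / (c + m + 1)) ^ s :=
      stmt_11_fac s (c + m) hs ht
    have h0 : 0 ≤ 1 - s / (c + m) := by
      have : s / (c + m) ≤ 1 := by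
        rw [div_le_one ht]; linarith [Nat.cast_nonneg (α := ℝ) m]
      linarith
    calc (∏ k ∈ Finset.range m, (1 - s / (c + k))) * (1 - s / (c + m))
        ≤ (c / (c + m)) ^ s * ((c + m) / (c + m + 1)) ^ s :=
          mul_le_mul ih h1 h0 (Real.rpow_nonneg (by positivity) s)
      _ = (c / (c + m + 1)) ^ s := by
          rw [← Real.mul_rpow (by positivity) (by positivity)]
          congr 1; field_simp
      _ = (c / (c + (m + 1 : ℕ))) ^ s := by push_cast; ring_nf

/-- SGD with step size `α_k = a/(b+k)`, `a, b > 0`, `a σ_ℓ² ≤ b`, satisfies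
`|E[⟨x_{n+1} − x*, v_ℓ⟩]| ≤ (b/(b+n))^{a σ_ℓ²} |⟨x_0 − x*, v_ℓ⟩|`,
the expectation averaging over all i.i.d. uniform index sequences. -/
theorem stmt_11 {M N : ℕ} (hM : 0 < M) (A : Matrix (Fin M) (Fin N) ℝ) (b : Fin M → ℝ)
    (σℓ : ℝ) (v : Fin N → ℝ) (hv : (Aᵀ * A).mulVec v = σℓ ^ 2 • v)
    (xstar : Fin N → ℝ)
    (hxstar : ∀ y : Fin N → ℝ,
      (A.mulVec xstar - b) ⬝ᵥ (A.mulVec xstar - b) ≤ (A.mulVec y - b) ⬝ᵥ (A.mulVec y - b))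
    (a c : ℝ) (ha : 0 < a) (hc : 0 < c) (hstep : a * σℓ ^ 2 ≤ c)
    (α : ℕ → ℝ) (hα : ∀ k, α k = a / (c + k))
    (x0 : Fin N → ℝ) (x : (ℕ → Fin M) → ℕ → (Fin N → ℝ))
    (hx0 : ∀ ω, x ω 0 = x0)
    (hupd : ∀ ω k, x ω (k + 1) =
      x ω k + (α k * M * (b (ω k) - A (ω k) ⬝ᵥ x ω k)) • A (ω k)) (n : ℕ) :
    |(1 / (M : ℝ) ^ (n + 1)) *
        ∑ ω : Fin (n + 1) → Fin M,
          ((x (fun j => if h : j < n + 1 then ω ⟨j, h⟩ else ω 0) (n + 1) - xstar) ⬝ᵥ v)| ≤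
      (c / (c + n)) ^ (a * σℓ ^ 2) * |(x0 - xstar) ⬝ᵥ v| := by
  -- Step 1: normal equation in direction v
  have h0 : (A.mulVec xstar - b) ⬝ᵥ A.mulVec v = 0 := by
    set r := A.mulVec xstar - b with hr
    set c1 := r ⬝ᵥ A.mulVec v with hc1
    set c2 := A.mulVec v ⬝ᵥ A.mulVec v with hc2
    have hc2n : 0 ≤ c2 := by
      simp only [hc2, dotProduct]
      exact Finset.sum_nonneg fun i _ => mul_self_nonneg _
    have key : ∀ t : ℝ, 0 ≤ 2 * t * c1 + t ^ 2 * c2 := by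
      intro t
      have h := hxstar (xstar + t • v)
      have hexp : A.mulVec (xstar + t • v) - b = r + t • A.mulVec v := by
        rw [hr, A.mulVec_add, A.mulVec_smul]; abel
      rw [hexp] at h
      have h2 : r ⬝ᵥ r ≤ r ⬝ᵥ r + 2 * t * c1 + t ^ 2 * c2 := by
        convert h using 1
        simp [dotProduct_add, add_dotProduct, dotProduct_smul, smul_dotProduct, hc1, hc2,
          dotProduct_comm (t • A.mulVec v) r]
        ring
      linarith
    have h := key (-c1 / (c2 + 1))
    have hq : 0 ≤ (-(c1 ^ 2) * (c2 + 2)) / (c2 + 1) ^ 2 := by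
      convert h using 1
      field_simp
      ring
    have h2 : 0 ≤ -(c1 ^ 2) * (c2 + 2) := by
      by_contra hcon
      push_neg at hcon
      have : (-(c1 ^ 2) * (c2 + 2)) / (c2 + 1) ^ 2 < 0 :=
        div_neg_of_neg_of_pos hcon (by positivity)
      linarith
    nlinarith [sq_nonneg c1]
  -- Step 2: averaging identity
  have hkey : ∀ y : Fin N → ℝ,
      ∑ m : Fin M, (b m - A m ⬝ᵥ y) * (A m ⬝ᵥ v) = σℓ ^ 2 * ((xstar - y) ⬝ᵥ v) := by
    intro y
    have e1 : ∑ m : Fin M, (b m - A m ⬝ᵥ y) * (A m ⬝ᵥ v) = (b - A.mulVec y) ⬝ᵥ A.mulVec v := by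
      simp [dotProduct, mulVec, Pi.sub_apply]
    have e2 : (b - A.mulVec y) ⬝ᵥ A.mulVec v = (A.mulVec xstar - A.mulVec y) ⬝ᵥ A.mulVec v := by
      have : (b - A.mulVec y) = (A.mulVec xstar - A.mulVec y) - (A.mulVec xstar - b) := by abel
      rw [this, sub_dotProduct, h0, sub_zero]
    have e3 : A.mulVec xstar - A.mulVec y = A.mulVec (xstar - y) := by rw [A.mulVec_sub]
    have e4 : A.mulVec (xstar - y) ⬝ᵥ A.mulVec v = (xstar - y) ⬝ᵥ (Aᵀ * A).mulVec v := by
      rw [← Matrix.mulVec_mulVec, Matrix.dotProduct_mulVec (xstar - y), Matrix.vecMul_transpose]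
    rw [e1, e2, e3, e4, hv, dotProduct_smul, smul_eq_mul]
  -- Step 3: dependence of x on initial segment
  have hdep : ∀ (m : ℕ) (ω ω' : ℕ → Fin M), (∀ j, j < m → ω j = ω' j) → x ω m = x ω' m := by
    intro m
    induction m with
    | zero => intro ω ω' _; rw [hx0, hx0]
    | succ m ih =>
      intro ω ω' h
      have hm : x ω m = x ω' m := ih ω ω' fun j hj => h j (Nat.lt_succ_of_lt hj)
      rw [hupd, hupd, hm, h m (Nat.lt_succ_self m)]
  set ext : (Fin (n + 1) → Fin M) → ℕ → Fin M :=
    fun ω j => if h : j < n + 1 then ω ⟨j, h⟩ else ω 0 with hext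
  -- Step 4: one-step recursion
  have hrec : ∀ k, k < n + 1 →
      ∑ ω : Fin (n + 1) → Fin M, ((x (ext ω) (k + 1) - xstar) ⬝ᵥ v) =
        (1 - α k * σℓ ^ 2) * ∑ ω : Fin (n + 1) → Fin M, ((x (ext ω) k - xstar) ⬝ᵥ v) := by
    intro k hk
    set K : Fin (n + 1) := ⟨k, hk⟩ with hK
    set e := Equiv.funSplitAt K (Fin M) with he
    have tr : ∀ F : (Fin (n + 1) → Fin M) → ℝ,
        ∑ ω, F ω = ∑ ρ : { j : Fin (n+1) // j ≠ K } → Fin M, ∑ m : Fin M, F (e.symm (m, ρ)) := by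
      intro F
      rw [← Equiv.sum_comp e.symm F, Fintype.sum_prod_type, Finset.sum_comm]
    have evalK : ∀ (m : Fin M) (ρ : { j : Fin (n+1) // j ≠ K } → Fin M), e.symm (m, ρ) K = m := by
      intro m ρ
      simp [he, Equiv.funSplitAt, Equiv.piSplitAt]
    have hX : ∀ (m m' : Fin M) (ρ : { j : Fin (n+1) // j ≠ K } → Fin M),
        x (ext (e.symm (m, ρ))) k = x (ext (e.symm (m', ρ))) k := by
      intro m m' ρ
      apply hdep
      intro j hj
      have hjn : j < n + 1 := lt_trans hj hk
      have hne : (⟨j, hjn⟩ : Fin (n + 1)) ≠ K := by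
        simp [hK, Fin.ext_iff]; omega
      simp only [hext, dif_pos hjn]
      simp [he, Equiv.funSplitAt, Equiv.piSplitAt, hne]
    rw [tr (fun ω => (x (ext ω) (k+1) - xstar) ⬝ᵥ v), tr (fun ω => (x (ext ω) k - xstar) ⬝ᵥ v),
      Finset.mul_sum]
    apply Finset.sum_congr rfl
    intro ρ _
    set m0 : Fin M := ⟨0, hM⟩ with hm0
    set X : Fin N → ℝ := x (ext (e.symm (m0, ρ))) k with hXdef
    have hXeq : ∀ m : Fin M, x (ext (e.symm (m, ρ))) k = X := fun m => hX m m0 ρ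
    have extK : ∀ m : Fin M, ext (e.symm (m, ρ)) k = m := by
      intro m
      simp only [hext, dif_pos hk]
      exact evalK m ρ
    have step : ∀ m : Fin M,
        (x (ext (e.symm (m, ρ))) (k + 1) - xstar) ⬝ᵥ v =
          (X - xstar) ⬝ᵥ v + (α k * M) * ((b m - A m ⬝ᵥ X) * (A m ⬝ᵥ v)) := by
      intro m
      rw [hupd, extK, hXeq]
      rw [add_sub_right_comm, add_dotProduct, smul_dotProduct, smul_eq_mul]
      ring
    calc ∑ m : Fin M, (x (ext (e.symm (m, ρ))) (k + 1) - xstar) ⬝ᵥ v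
        = ∑ m : Fin M, ((X - xstar) ⬝ᵥ v + (α k * M) * ((b m - A m ⬝ᵥ X) * (A m ⬝ᵥ v))) :=
          Finset.sum_congr rfl fun m _ => step m
      _ = M * ((X - xstar) ⬝ᵥ v) + (α k * M) * (σℓ ^ 2 * ((xstar - X) ⬝ᵥ v)) := by
          rw [Finset.sum_add_distrib, Finset.sum_const, ← Finset.mul_sum, hkey X]
          simp [mul_comm]
      _ = (1 - α k * σℓ ^ 2) * ∑ m : Fin M, (X - xstar) ⬝ᵥ v := by
          rw [Finset.sum_const]
          have : (xstar - X) ⬝ᵥ v = -((X - xstar) ⬝ᵥ v) := by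
            rw [← neg_sub, neg_dotProduct]
          rw [this]
          simp [Finset.card_univ]
          ring
      _ = (1 - α k * σℓ ^ 2) * ∑ m : Fin M, (x (ext (e.symm (m, ρ))) k - xstar) ⬝ᵥ v := by
          congr 1
          exact (Finset.sum_congr rfl fun m _ => by rw [hXeq]).symm
  -- Step 5: closed form by induction
  have hclosed : ∀ m : ℕ, m ≤ n + 1 →
      ∑ ω : Fin (n + 1) → Fin M, ((x (ext ω) m - xstar) ⬝ᵥ v) =
        (∏ k ∈ Finset.range m, (1 - α k * σℓ ^ 2)) * ((M : ℝ) ^ (n + 1) * ((x0 - xstar) ⬝ᵥ v)) := by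
    intro m
    induction m with
    | zero =>
      intro _
      simp only [hx0, Finset.range_zero, Finset.prod_empty, one_mul]
      rw [Finset.sum_const, Finset.card_univ]
      simp [Fintype.card_fun]
    | succ m ih =>
      intro hm
      have hm' : m ≤ n + 1 := Nat.le_of_succ_le hm
      rw [hrec m (Nat.lt_of_succ_le hm), ih hm', Finset.prod_range_succ]
      ring
  have hmain := hclosed (n + 1) le_rfl
  rw [hmain]
  -- Step 6: final bound
  set s := a * σℓ ^ 2 with hs
  have hs0 : 0 ≤ s := by positivity
  have hfac : ∀ k : ℕ, 1 - α k * σℓ ^ 2 = 1 - s / (c + k) := by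
    intro k
    rw [hα k, hs]; ring
  have hpnn : ∀ k ∈ Finset.range (n + 1), (0:ℝ) ≤ 1 - α k * σℓ ^ 2 := by
    intro k _
    rw [hfac k]
    have hck : (0:ℝ) < c + k := by positivity
    have : s / (c + k) ≤ 1 := by
      rw [div_le_one hck]; linarith [Nat.cast_nonneg (α := ℝ) k]
    linarith
  have hP0 : 0 ≤ ∏ k ∈ Finset.range (n + 1), (1 - α k * σℓ ^ 2) := Finset.prod_nonneg hpnn
  have hMpow : (0:ℝ) < (M : ℝ) ^ (n + 1) := by positivity
  have habs : |(1 / (M : ℝ) ^ (n + 1)) *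
      ((∏ k ∈ Finset.range (n + 1), (1 - α k * σℓ ^ 2)) *
        ((M : ℝ) ^ (n + 1) * ((x0 - xstar) ⬝ᵥ v)))| =
      (∏ k ∈ Finset.range (n + 1), (1 - α k * σℓ ^ 2)) * |(x0 - xstar) ⬝ᵥ v| := by
    rw [abs_mul, abs_mul, abs_mul, abs_of_nonneg hP0, abs_of_pos hMpow,
      abs_of_pos (by positivity : (0:ℝ) < 1 / (M : ℝ) ^ (n + 1))]
    rw [one_div, mul_left_comm, inv_mul_cancel_left₀ hMpow.ne']
  rw [habs]
  have hPbd : (∏ k ∈ Finset.range (n + 1), (1 - α k * σℓ ^ 2)) ≤ (c / (c + n)) ^ s := by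
    have h1 : (∏ k ∈ Finset.range (n + 1), (1 - α k * σℓ ^ 2)) =
        ∏ k ∈ Finset.range (n + 1), (1 - s / (c + k)) :=
      Finset.prod_congr rfl fun k _ => hfac k
    rw [h1]
    refine (stmt_11_prodbd s c hs0 hc hstep (n + 1)).trans ?_
    apply Real.rpow_le_rpow (by positivity) _ hs0
    apply div_le_div_of_nonneg_left hc.le (by positivity)
    push_cast; linarith
  exact mul_le_mul_of_nonneg_right hPbd (abs_nonneg _) |>.trans_eq rfl
end

section
/- If SGD is run with step size α_k = a/(b+k)^γ for 1/2 ≤ γ < 1 and a, b > 0 with aσ_ℓ² ≤ b^γ, then |E[⟨x_{n+1} − x*, v_ℓ⟩]| ≤ exp( (aσ_ℓ²/(1−γ)) (b^{1−γ} − (b+n)^{1−γ}) ) |⟨x_0 − x*, v_ℓ⟩|. -/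
open Matrix Finset Real

lemma aux_avg {M n : ℕ} (khat : Fin n) (F : (Fin n → Fin M) → Fin M → ℝ)
    (hF : ∀ ω ω' : Fin n → Fin M, (∀ j, j ≠ khat → ω j = ω' j) → ∀ i, F ω i = F ω' i) :
    (M : ℝ) * ∑ ω : Fin n → Fin M, F ω (ω khat) = ∑ ω : Fin n → Fin M, ∑ i : Fin M, F ω i := by
  classical
  set e := Equiv.funSplitAt khat (Fin M) with he
  have hsymm : ∀ (i : Fin M) (ρ : {j : Fin n // j ≠ khat} → Fin M) (j : Fin n) (hj : j ≠ khat),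
      e.symm (i, ρ) j = ρ ⟨j, hj⟩ := by
    intro i ρ j hj
    simp [he, Equiv.funSplitAt, Equiv.piSplitAt, dif_neg hj]
  have hk : ∀ (i : Fin M) ρ, e.symm (i, ρ) khat = i := by
    intro i ρ; simp [he, Equiv.funSplitAt, Equiv.piSplitAt]
  have key : ∀ (i : Fin M) ρ (i' : Fin M), F (e.symm (i, ρ)) i' = F (e.symm (i', ρ)) i' := by
    intro i ρ i'
    exact hF _ _ (fun j hj => by rw [hsymm i ρ j hj, hsymm i' ρ j hj]) i'
  rw [← Equiv.sum_comp e.symm (fun ω => F ω (ω khat)),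
      ← Equiv.sum_comp e.symm (fun ω => ∑ i, F ω i)]
  rw [Fintype.sum_prod_type, Fintype.sum_prod_type]
  simp only [hk]
  rw [Finset.sum_comm, Finset.mul_sum]
  conv_rhs => rw [Finset.sum_comm]
  refine Finset.sum_congr rfl ?_
  intro ρ _
  have h2 : ∀ i : Fin M, ∑ i', F (e.symm (i, ρ)) i' = ∑ i', F (e.symm (i', ρ)) i' :=
    fun i => Finset.sum_congr rfl fun i' _ => key i ρ i'
  calc (M:ℝ) * ∑ i, F (e.symm (i, ρ)) i
      = ∑ _i' : Fin M, ∑ i, F (e.symm (i, ρ)) i := by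
        rw [Finset.sum_const, card_univ, Fintype.card_fin, nsmul_eq_mul]
    _ = ∑ i' : Fin M, ∑ i, F (e.symm (i', ρ)) i := by
        refine Finset.sum_congr rfl fun i' _ => (h2 i').symm
    _ = ∑ i, ∑ i', F (e.symm (i, ρ)) i' := rfl

lemma aux_grad {M N : ℕ} (A : Matrix (Fin M) (Fin N) ℝ) (b : Fin M → ℝ) (xstar : Fin N → ℝ)
    (hxstar : ∀ y : Fin N → ℝ,
      (A.mulVec xstar - b) ⬝ᵥ (A.mulVec xstar - b) ≤ (A.mulVec y - b) ⬝ᵥ (A.mulVec y - b)) :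
    Aᵀ.mulVec (A.mulVec xstar - b) = 0 := by
  set r := A.mulVec xstar - b with hr
  set g := Aᵀ.mulVec r with hg
  have dps : ∀ (K : ℕ) (u : Fin K → ℝ), 0 ≤ u ⬝ᵥ u :=
    fun K u => Finset.sum_nonneg fun i _ => mul_self_nonneg _
  by_contra hne
  have hG : 0 < g ⬝ᵥ g := by
    rcases lt_or_eq_of_le (dps _ g) with h | h
    · exact h
    · exact absurd (dotProduct_self_eq_zero.mp h.symm) hne
  set w := A.mulVec g with hw
  set Q := w ⬝ᵥ w with hQ
  have hQ0 : 0 ≤ Q := dps _ w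
  set t := (g ⬝ᵥ g) / (Q + 1) with ht
  have ht0 : 0 < t := div_pos hG (by linarith)
  have hrw : r ⬝ᵥ w = g ⬝ᵥ g := by
    rw [hw, Matrix.dotProduct_mulVec, ← Matrix.mulVec_transpose, ← hg]
  have hy := hxstar (xstar - t • g)
  have hexp : A.mulVec (xstar - t • g) - b = r - t • w := by
    rw [Matrix.mulVec_sub, Matrix.mulVec_smul, hr, hw]; abel
  rw [hexp] at hy
  have hy2 : r ⬝ᵥ r ≤ r ⬝ᵥ r - 2 * t * (g ⬝ᵥ g) + t ^ 2 * Q := by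
    have : (r - t • w) ⬝ᵥ (r - t • w)
        = r ⬝ᵥ r - t * (r ⬝ᵥ w) - t * (w ⬝ᵥ r) + t ^ 2 * (w ⬝ᵥ w) := by
      simp [sub_dotProduct, dotProduct_sub, smul_dotProduct,
        dotProduct_smul, smul_eq_mul]
      ring
    rw [this, dotProduct_comm w r, hrw] at hy
    calc r ⬝ᵥ r ≤ _ := hy
    _ = r ⬝ᵥ r - 2 * t * (g ⬝ᵥ g) + t ^ 2 * Q := by rw [← hQ]; ring
  have htq : t * (Q + 1) = g ⬝ᵥ g := by
    rw [ht, div_mul_cancel₀]; linarith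
  nlinarith [sq_nonneg t, mul_pos ht0 hG]

lemma aux_sum (c γ : ℝ) (hc : 0 < c) (hγ0 : 0 ≤ γ) (hγ2 : γ < 1) (m : ℕ) :
    ((c + m) ^ (1 - γ) - c ^ (1 - γ)) / (1 - γ) ≤ ∑ k ∈ Finset.range m, 1 / (c + k) ^ γ := by
  have hp0 : 0 < 1 - γ := by linarith
  induction m with
  | zero => simp
  | succ m ih =>
    rw [Finset.sum_range_succ]
    set s := c + (m : ℝ) with hs
    have hs0 : 0 < s := by positivity
    have key : (s + 1) ^ (1 - γ) ≤ s ^ (1 - γ) + (1 - γ) / s ^ γ := by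
      have h1 : s + 1 = s * (1 + 1 / s) := by field_simp
      have h2 : (s * (1 + 1 / s)) ^ (1 - γ) = s ^ (1 - γ) * (1 + 1 / s) ^ (1 - γ) :=
        Real.mul_rpow hs0.le (by positivity)
      have h3 : (1 + 1 / s) ^ (1 - γ) ≤ 1 + (1 - γ) * (1 / s) :=
        rpow_one_add_le_one_add_mul_self
          (le_trans (by norm_num) (le_of_lt (by positivity : (0:ℝ) < 1 / s))) hp0.le (by linarith)
      have h4 : s ^ (1 - γ) * (1 / s) = 1 / s ^ γ := by
        have he : (1:ℝ) - γ = 1 + -γ := by ring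
        rw [he, Real.rpow_add hs0, Real.rpow_one, Real.rpow_neg hs0.le]
        have : s ^ γ ≠ 0 := ne_of_gt (Real.rpow_pos_of_pos hs0 γ)
        field_simp
      calc (s + 1) ^ (1 - γ) = s ^ (1 - γ) * (1 + 1 / s) ^ (1 - γ) := by rw [h1, h2]
        _ ≤ s ^ (1 - γ) * (1 + (1 - γ) * (1 / s)) := by
            have := Real.rpow_nonneg hs0.le (1 - γ)
            nlinarith
        _ = s ^ (1 - γ) + (1 - γ) * (s ^ (1 - γ) * (1 / s)) := by ring
        _ = s ^ (1 - γ) + (1 - γ) / s ^ γ := by rw [h4]; ring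
    have hcast : c + ((m : ℕ) + 1 : ℕ) = s + 1 := by push_cast [hs]; ring
    calc ((c + ((m + 1 : ℕ)) : ℝ) ^ (1 - γ) - c ^ (1 - γ)) / (1 - γ)
        = ((s + 1) ^ (1 - γ) - c ^ (1 - γ)) / (1 - γ) := by rw [hcast]
      _ ≤ ((s ^ (1 - γ) + (1 - γ) / s ^ γ) - c ^ (1 - γ)) / (1 - γ) := by
          gcongr
      _ = (s ^ (1 - γ) - c ^ (1 - γ)) / (1 - γ) + 1 / s ^ γ := by
          have : s ^ γ ≠ 0 := ne_of_gt (Real.rpow_pos_of_pos hs0 γ)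
          field_simp
          ring
      _ ≤ (∑ k ∈ Finset.range m, 1 / (c + k) ^ γ) + 1 / (c + m) ^ γ := by
          rw [← hs]; exact add_le_add_left ih _

/-- SGD with step size `α_k = a/(b+k)^γ`, `1/2 ≤ γ < 1`, `a, b > 0`, `a σ_ℓ² ≤ b^γ`,
satisfies
`|E[⟨x_{n+1} − x*, v_ℓ⟩]| ≤ exp((a σ_ℓ²/(1−γ))(b^{1−γ} − (b+n)^{1−γ})) |⟨x_0 − x*, v_ℓ⟩|`,
the expectation averaging over all i.i.d. uniform index sequences. -/
theorem stmt_15 {M N : ℕ} (hM : 0 < M) (A : Matrix (Fin M) (Fin N) ℝ) (b : Fin M → ℝ)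
    (σℓ : ℝ) (v : Fin N → ℝ) (hv : (Aᵀ * A).mulVec v = σℓ ^ 2 • v)
    (xstar : Fin N → ℝ)
    (hxstar : ∀ y : Fin N → ℝ,
      (A.mulVec xstar - b) ⬝ᵥ (A.mulVec xstar - b) ≤ (A.mulVec y - b) ⬝ᵥ (A.mulVec y - b))
    (a c γ : ℝ) (ha : 0 < a) (hc : 0 < c) (hγ1 : 1 / 2 ≤ γ) (hγ2 : γ < 1)
    (hstep : a * σℓ ^ 2 ≤ c ^ γ)
    (α : ℕ → ℝ) (hα : ∀ k, α k = a / (c + k) ^ γ)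
    (x0 : Fin N → ℝ) (x : (ℕ → Fin M) → ℕ → (Fin N → ℝ))
    (hx0 : ∀ ω, x ω 0 = x0)
    (hupd : ∀ ω k, x ω (k + 1) =
      x ω k + (α k * M * (b (ω k) - A (ω k) ⬝ᵥ x ω k)) • A (ω k)) (n : ℕ) :
    |(1 / (M : ℝ) ^ (n + 1)) *
        ∑ ω : Fin (n + 1) → Fin M,
          ((x (fun j => if h : j < n + 1 then ω ⟨j, h⟩ else ω 0) (n + 1) - xstar) ⬝ᵥ v)| ≤
      Real.exp ((a * σℓ ^ 2 / (1 - γ)) * (c ^ (1 - γ) - (c + (n : ℝ)) ^ (1 - γ))) *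
        |(x0 - xstar) ⬝ᵥ v| := by
  classical
  have hγ0 : (0:ℝ) ≤ γ := by linarith
  have hσ2 : (0:ℝ) ≤ σℓ ^ 2 := sq_nonneg _
  have hg : Aᵀ.mulVec (A.mulVec xstar - b) = 0 := aux_grad A b xstar hxstar
  -- powers positivity
  have hpow : ∀ k : ℕ, (0:ℝ) < (c + (k:ℝ)) ^ γ :=
    fun k => Real.rpow_pos_of_pos (by positivity) γ
  -- step size bounds
  have hαnn : ∀ k, 0 ≤ α k := fun k => by
    rw [hα]; positivity
  have hfac0 : ∀ k : ℕ, 0 ≤ 1 - α k * σℓ ^ 2 := by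
    intro k
    have h1 : a * σℓ ^ 2 ≤ (c + (k:ℝ)) ^ γ := by
      refine hstep.trans (Real.rpow_le_rpow hc.le (by linarith [Nat.cast_nonneg (α := ℝ) k]) hγ0)
    have : α k * σℓ ^ 2 ≤ 1 := by
      rw [hα, div_mul_eq_mul_div]
      exact div_le_one_of_le₀ h1 (hpow k).le
    linarith
  -- dependence of x only on earlier coordinates
  have hdep : ∀ (k : ℕ) (ω ω' : ℕ → Fin M), (∀ j, j < k → ω j = ω' j) → x ω k = x ω' k := by
    intro k
    induction k with
    | zero => intro ω ω' _; rw [hx0, hx0]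
    | succ k ih =>
      intro ω ω' hagree
      have hx : x ω k = x ω' k := ih ω ω' fun j hj => hagree j (by omega)
      rw [hupd, hupd, hx, hagree k (by omega)]
  set ext : (Fin (n + 1) → Fin M) → ℕ → Fin M :=
    fun ω j => if h : j < n + 1 then ω ⟨j, h⟩ else ω 0 with hext
  set S : ℕ → ℝ := fun m => ∑ ω : Fin (n + 1) → Fin M, ((x (ext ω) m - xstar) ⬝ᵥ v) with hS
  -- base case
  have hS0 : S 0 = (M : ℝ) ^ (n + 1) * ((x0 - xstar) ⬝ᵥ v) := by
    simp only [hS, hx0]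
    rw [Finset.sum_const, card_univ]
    simp [Fintype.card_fun, mul_comm]
  -- key dot product computation
  have hdot : ∀ u : Fin N → ℝ,
      ∑ i : Fin M, (b i - A i ⬝ᵥ u) * (A i ⬝ᵥ v) = -(σℓ ^ 2) * ((u - xstar) ⬝ᵥ v) := by
    intro u
    have e1 : ∑ i : Fin M, (b i - A i ⬝ᵥ u) * (A i ⬝ᵥ v) = (b - A.mulVec u) ⬝ᵥ A.mulVec v := by
      simp [dotProduct, Matrix.mulVec, Pi.sub_apply]
    have e2 : b - A.mulVec u = -(A.mulVec xstar - b) - A.mulVec (u - xstar) := by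
      rw [Matrix.mulVec_sub]; abel
    have e3 : (A.mulVec xstar - b) ⬝ᵥ A.mulVec v = 0 := by
      rw [Matrix.dotProduct_mulVec, ← Matrix.mulVec_transpose, hg, zero_dotProduct]
    have e4 : A.mulVec (u - xstar) ⬝ᵥ A.mulVec v = σℓ ^ 2 * ((u - xstar) ⬝ᵥ v) := by
      rw [dotProduct_comm, Matrix.dotProduct_mulVec, ← Matrix.mulVec_transpose,
        Matrix.mulVec_mulVec, hv, smul_dotProduct, smul_eq_mul,
        dotProduct_comm]
    rw [e1, e2, sub_dotProduct, neg_dotProduct, e3, e4]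
    ring
  -- the recursion
  have hSrec : ∀ k, k ≤ n → S (k + 1) = (1 - α k * σℓ ^ 2) * S k := by
    intro k hk
    have hkn : k < n + 1 := by omega
    set khat : Fin (n + 1) := ⟨k, hkn⟩ with hkhat
    have hext_k : ∀ ω : Fin (n + 1) → Fin M, ext ω k = ω khat := by
      intro ω; simp only [hext]; rw [dif_pos hkn]
    set F : (Fin (n + 1) → Fin M) → Fin M → ℝ :=
      fun ω i => (b i - A i ⬝ᵥ x (ext ω) k) * (A i ⬝ᵥ v) with hF
    have step1 : ∀ ω : Fin (n + 1) → Fin M,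
        (x (ext ω) (k + 1) - xstar) ⬝ᵥ v
          = (x (ext ω) k - xstar) ⬝ᵥ v + α k * ((M : ℝ) * F ω (ω khat)) := by
      intro ω
      rw [hupd (ext ω) k, hext_k ω]
      simp only [hF, sub_dotProduct, add_dotProduct, smul_dotProduct,
        smul_eq_mul]
      ring
    have hFdep : ∀ ω ω' : Fin (n + 1) → Fin M,
        (∀ j, j ≠ khat → ω j = ω' j) → ∀ i, F ω i = F ω' i := by
      intro ω ω' hagree i
      have hxx : x (ext ω) k = x (ext ω') k := by
        apply hdep k
        intro j hj
        have hjn : j < n + 1 := by omega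
        have hne : (⟨j, hjn⟩ : Fin (n + 1)) ≠ khat := by
          simp only [hkhat, ne_eq, Fin.mk.injEq]; omega
        simp only [hext]
        rw [dif_pos hjn, dif_pos hjn, hagree _ hne]
      simp only [hF, hxx]
    have havg := aux_avg khat F hFdep
    calc S (k + 1) = ∑ ω : Fin (n + 1) → Fin M,
          ((x (ext ω) k - xstar) ⬝ᵥ v + α k * ((M : ℝ) * F ω (ω khat))) := by
          simp only [hS]
          exact Finset.sum_congr rfl fun ω _ => step1 ω
      _ = S k + α k * ((M : ℝ) * ∑ ω : Fin (n + 1) → Fin M, F ω (ω khat)) := by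
          rw [Finset.sum_add_distrib]
          simp only [hS]
          congr 1
          rw [Finset.mul_sum, Finset.mul_sum]
      _ = S k + α k * ∑ ω : Fin (n + 1) → Fin M, ∑ i : Fin M, F ω i := by rw [havg]
      _ = S k + α k * ∑ ω : Fin (n + 1) → Fin M, (-(σℓ ^ 2) * ((x (ext ω) k - xstar) ⬝ᵥ v)) := by
          congr 1
          congr 1
          exact Finset.sum_congr rfl fun ω _ => hdot (x (ext ω) k)
      _ = S k + α k * (-(σℓ ^ 2) * S k) := by rw [← Finset.mul_sum]
      _ = (1 - α k * σℓ ^ 2) * S k := by ring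
  -- iterate
  have hprod : ∀ m, m ≤ n + 1 → S m = (∏ k ∈ Finset.range m, (1 - α k * σℓ ^ 2)) * S 0 := by
    intro m
    induction m with
    | zero => intro _; simp
    | succ m ih =>
      intro hm
      rw [hSrec m (by omega), ih (by omega), Finset.prod_range_succ]
      ring
  set P := ∏ k ∈ Finset.range (n + 1), (1 - α k * σℓ ^ 2) with hP
  have hP0 : 0 ≤ P := Finset.prod_nonneg fun k _ => hfac0 k
  -- the product bound
  have hPle : P ≤ Real.exp ((a * σℓ ^ 2 / (1 - γ)) * (c ^ (1 - γ) - (c + (n : ℝ)) ^ (1 - γ))) := by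
    have h1 : P ≤ ∏ k ∈ Finset.range (n + 1), Real.exp (-(α k * σℓ ^ 2)) := by
      apply Finset.prod_le_prod (fun k _ => hfac0 k)
      intro k _
      have := Real.add_one_le_exp (-(α k * σℓ ^ 2))
      linarith
    have h2 : ∏ k ∈ Finset.range (n + 1), Real.exp (-(α k * σℓ ^ 2))
        = Real.exp (∑ k ∈ Finset.range (n + 1), -(α k * σℓ ^ 2)) := (Real.exp_sum _ _).symm
    have h3 : ∑ k ∈ Finset.range (n + 1), -(α k * σℓ ^ 2)
        ≤ (a * σℓ ^ 2 / (1 - γ)) * (c ^ (1 - γ) - (c + (n : ℝ)) ^ (1 - γ)) := by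
      have hsum : ∑ k ∈ Finset.range (n + 1), -(α k * σℓ ^ 2)
          = -(a * σℓ ^ 2) * ∑ k ∈ Finset.range (n + 1), 1 / (c + (k:ℝ)) ^ γ := by
        rw [Finset.mul_sum]
        refine Finset.sum_congr rfl fun k _ => ?_
        rw [hα]
        field_simp
      have haux : ((c + (n:ℝ)) ^ (1 - γ) - c ^ (1 - γ)) / (1 - γ)
          ≤ ∑ k ∈ Finset.range (n + 1), 1 / (c + (k:ℝ)) ^ γ := by
        refine (aux_sum c γ hc hγ0 hγ2 n).trans ?_
        rw [Finset.sum_range_succ]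
        have : 0 ≤ 1 / (c + (n:ℝ)) ^ γ := by positivity
        linarith
      have haσ : 0 ≤ a * σℓ ^ 2 := by positivity
      have := mul_le_mul_of_nonneg_left haux haσ
      rw [hsum]
      have hp0 : (0:ℝ) < 1 - γ := by linarith
      have hrhs : a * σℓ ^ 2 / (1 - γ) * (c ^ (1 - γ) - (c + (n:ℝ)) ^ (1 - γ))
          = -(a * σℓ ^ 2 * (((c + (n:ℝ)) ^ (1 - γ) - c ^ (1 - γ)) / (1 - γ))) := by
        field_simp
        ring
      rw [hrhs]
      linarith
    calc P ≤ _ := h1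
      _ = _ := h2
      _ ≤ _ := Real.exp_le_exp.mpr h3
  -- finish
  have hgoal : (∑ ω : Fin (n + 1) → Fin M,
      ((x (fun j => if h : j < n + 1 then ω ⟨j, h⟩ else ω 0) (n + 1) - xstar) ⬝ᵥ v)) = S (n + 1) := by
    simp only [hS, hext]
  rw [hgoal, hprod (n + 1) le_rfl, hS0, ← hP]
  have hMpow : ((M : ℝ)) ^ (n + 1) ≠ 0 := by positivity
  have heq : (1 / (M : ℝ) ^ (n + 1)) * (P * ((M : ℝ) ^ (n + 1) * ((x0 - xstar) ⬝ᵥ v)))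
      = P * ((x0 - xstar) ⬝ᵥ v) := by
    field_simp
  rw [heq, abs_mul, abs_of_nonneg hP0]
  exact mul_le_mul_of_nonneg_right hPle (abs_nonneg _)
end
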